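/- Let φ: ℝⁿ → ℝᵐ be defined by φ(x)_j = Σᵢ φᵢʲ(xᵢ), where each φᵢʲ: ℝ → ℝ is piecewise linear with at most k pieces. Then φ is piecewise linear with at most k^(n·m) pieces. -/
import Mathlib


/-- A function φ : ℝ → ℝ is piecewise linear with at most k pieces. -/
def PWL1 (k : ℕ) (φ : ℝ → ℝ) : Prop :=
  ∃ P : Fin k → Set ℝ, (∀ x, ∃ i, x ∈ P i) ∧
    ∀ i, ∃ a c : ℝ, ∀ x ∈ P i, φ x = a * x + c

/-- A function f : ℝⁿ → ℝᵐ is piecewise linear with at most k pieces. -/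
def PWL (n m k : ℕ) (f : (Fin n → ℝ) → (Fin m → ℝ)) : Prop :=
  ∃ P : Fin k → Set (Fin n → ℝ), (∀ x, ∃ i, x ∈ P i) ∧
    ∀ i, ∃ (A : Matrix (Fin m) (Fin n) ℝ) (c : Fin m → ℝ),
      ∀ x ∈ P i, f x = A.mulVec x + c

/-- a KAN layer φ(x)_j = Σᵢ φᵢʲ(xᵢ), whose activation functions each have at
most k pieces, is piecewise linear with at most k^(n·m) pieces. -/
theorem stmt4 (n m k : ℕ) (φ : Fin m → Fin n → ℝ → ℝ)
    (hφ : ∀ j i, PWL1 k (φ j i)) :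
    PWL n m (k ^ (n * m)) (fun x j => ∑ i, φ j i (x i)) := by
  classical
  choose P hcov hlin using hφ
  choose a c hlin using hlin
  let e : Fin (k ^ (n * m)) ≃ (Fin n × Fin m → Fin k) :=
    finFunctionFinEquiv.symm.trans
      ((Equiv.arrowCongr finProdFinEquiv (Equiv.refl (Fin k))).symm)
  refine ⟨fun t => {x | ∀ i j, x i ∈ P j i (e t (i, j))}, ?_, ?_⟩
  · intro x
    choose s hs using fun i j => hcov j i (x i)
    exact ⟨e.symm fun p => s p.1 p.2, by
      intro i j
      simpa using hs i j⟩
  · intro t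
    refine ⟨fun j i => a j i (e t (i, j)), fun j => ∑ i, c j i (e t (i, j)), ?_⟩
    intro x hx
    funext j
    have : ∀ i, φ j i (x i) = a j i (e t (i, j)) * x i + c j i (e t (i, j)) :=
      fun i => hlin j i (e t (i, j)) (x i) (hx i j)
    simp only [this, Matrix.mulVec, dotProduct, Pi.add_apply,
      Finset.sum_add_distrib]
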